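/- If the braiding data is non-degenerate, i.e., ⟨y^λ, y^0⟩ = δ_{λ,0} w for all λ (where w = Σ_λ d_λ²), then w = |z|² where z = Σ_λ d_λ² ω_λ. -/

import Mathlib

/-- If the braiding data is non-degenerate, i.e.
`⟨y^λ, y^0⟩ = δ_{λ,0} w` for all `λ` (with `w = ∑ d_λ²` the global index),
then `w = |z|²` where `z = ∑ d_λ² ω_λ`. -/
theorem global_index_eq_normSq_of_nondegenerate
    {Δ : Type*} [Fintype Δ] [DecidableEq Δ] (z0 : Δ) (bar : Δ → Δ)
    (Nc : Δ → Δ → Δ → ℕ) (d : Δ → ℝ) (ω : Δ → ℂ) (Y : Δ → Δ → ℂ)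
    (hNcomm : ∀ l m n, Nc l m n = Nc m l n)
    (hNid : ∀ l m, Nc z0 l m = if l = m then 1 else 0)
    (hFrob : ∀ l m n, Nc l m n = Nc (bar l) n m ∧ Nc l m n = Nc n (bar m) l)
    (hassoc : ∀ l n r s, ∑ m, Nc l m n * Nc r s m = ∑ t, Nc l r t * Nc t s n)
    (hd : ∀ l, 0 < d l) (hd0 : d z0 = 1) (hdbar : ∀ l, d (bar l) = d l)
    (hdim : ∀ l m, ∑ n, (Nc l m n : ℝ) * d n = d l * d m)
    (hω : ∀ l, ‖ω l‖ = 1) (hω0 : ω z0 = 1) (hωbar : ∀ l, ω (bar l) = ω l)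
    (hY : ∀ m n, Y m n = ∑ l, (ω m * ω n / ω l) * (Nc m n l : ℂ) * (d l : ℂ))
    (hnondeg : ∀ l, ∑ m, star (Y l m) * (d m : ℂ) =
      if l = z0 then ((∑ n, d n ^ 2 : ℝ) : ℂ) else 0) :
    (∑ l, d l ^ 2) = Complex.normSq (∑ l, (d l : ℂ) ^ 2 * ω l) := by
  set z : ℂ := ∑ l, (d l : ℂ) ^ 2 * ω l with hzdef
  have hωne : ∀ l, ω l ≠ 0 := by
    intro l h
    have := hω l
    rw [h] at this
    simp at this
  have hstar : ∀ l, star (ω l) = (ω l)⁻¹ := by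
    intro l
    have h1 : star (ω l) * ω l = 1 := by
      rw [Complex.star_def, ← Complex.normSq_eq_conj_mul_self, Complex.normSq_eq_norm_sq, hω l]
      norm_num
    exact eq_inv_of_mul_eq_one_left h1
  -- star of Y
  have hYstar : ∀ l m, star (Y l m)
      = ∑ n, (ω n / (ω l * ω m)) * (Nc l m n : ℂ) * (d n : ℂ) := by
    intro l m
    rw [hY, star_sum]
    refine Finset.sum_congr rfl fun n _ => ?_
    simp only [star_mul', star_div₀, hstar, star_natCast, Complex.star_def,
      Complex.conj_ofReal]
    field_simp
  -- column sum of fusion coefficients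
  have hcol : ∀ m n, ∑ l, (Nc l m n : ℝ) * d l = d n * d m := by
    intro m n
    have : ∀ l, (Nc l m n : ℝ) = (Nc n (bar m) l : ℝ) := fun l => by
      exact_mod_cast congrArg Nat.cast (hFrob l m n).2
    calc ∑ l, (Nc l m n : ℝ) * d l = ∑ l, (Nc n (bar m) l : ℝ) * d l := by
          refine Finset.sum_congr rfl fun l _ => by rw [this l]
      _ = d n * d (bar m) := hdim n (bar m)
      _ = d n * d m := by rw [hdbar]
  -- the key double computation
  have h1 : ∑ l, (d l : ℂ) * ω l * (∑ m, star (Y l m) * (d m : ℂ))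
      = ((∑ l, d l ^ 2 : ℝ) : ℂ) := by
    simp only [hnondeg, mul_ite, mul_zero]
    rw [Finset.sum_ite_eq' Finset.univ z0]
    simp [hd0, hω0]
  have h2 : ∑ l, (d l : ℂ) * ω l * (∑ m, star (Y l m) * (d m : ℂ))
      = z * star z := by
    have step1 : ∑ l, (d l : ℂ) * ω l * (∑ m, star (Y l m) * (d m : ℂ))
        = ∑ m, ∑ n, (ω n / ω m) * (∑ l, (Nc l m n : ℂ) * (d l : ℂ)) * (d n : ℂ) * (d m : ℂ) := by
      simp only [hYstar, Finset.mul_sum, Finset.sum_mul]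
      rw [Finset.sum_comm]
      refine Finset.sum_congr rfl fun m _ => ?_
      rw [Finset.sum_comm]
      refine Finset.sum_congr rfl fun n _ => ?_
      refine Finset.sum_congr rfl fun l _ => ?_
      have h1 := hωne l
      have h2 := hωne m
      field_simp
    rw [step1]
    have hcolC : ∀ m n, ∑ l, (Nc l m n : ℂ) * (d l : ℂ) = ((d n : ℂ) * (d m : ℂ)) := by
      intro m n
      have h := congrArg (fun x : ℝ => (x : ℂ)) (hcol m n)
      push_cast at h
      exact h
    have step2 : ∀ m n : Δ, (ω n / ω m) * (∑ l, (Nc l m n : ℂ) * (d l : ℂ)) * (d n : ℂ) * (d m : ℂ)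
        = ((d n : ℂ) ^ 2 * ω n) * ((d m : ℂ) ^ 2 * (ω m)⁻¹) := by
      intro m n
      rw [hcolC]
      have h2 := hωne m
      field_simp
    have hstarz : star z = ∑ m, (d m : ℂ) ^ 2 * (ω m)⁻¹ := by
      rw [hzdef, star_sum]
      refine Finset.sum_congr rfl fun m _ => ?_
      simp [star_mul', hstar, Complex.star_def, Complex.conj_ofReal, mul_comm]
    rw [hstarz, hzdef, Finset.sum_mul_sum]
    conv_lhs => rw [Finset.sum_comm]
    exact Finset.sum_congr rfl fun n _ => Finset.sum_congr rfl fun m _ => step2 m n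
  have hkey : ((∑ l, d l ^ 2 : ℝ) : ℂ) = z * star z := by rw [← h1, h2]
  have : z * star z = (Complex.normSq z : ℂ) := by
    rw [Complex.star_def, Complex.mul_conj]
  rw [this] at hkey
  exact_mod_cast hkey
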